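/- Let Ψ = (1/√2)(e_0 ⊗ ψ_0 + e_1 ⊗ ψ_1) and Φ = (1/√2)(e_0 ⊗ φ_0 + e_1 ⊗ φ_1) be maximally entangled states of two qubits (ψ_0 ⊥ ψ_1, φ_0 ⊥ φ_1 unit vectors), with Ψ ⊥ Φ. If the unitary U = |φ_0⟩⟨ψ_0| + |φ_1⟩⟨ψ_1| is Hermitian, then (1/√2)(Ψ + Φ) is a product state in C^2 ⊗ C^2. -/

import Mathlib

open scoped Matrix

noncomputable section

abbrev Qubit := EuclideanSpace ℂ (Fin 2)
abbrev TwoQubit := EuclideanSpace ℂ (Fin 2 × Fin 2)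

/-- Elementary tensor (product state) of two qubit vectors. -/
def tp (a b : Qubit) : TwoQubit := WithLp.toLp 2 (fun p : Fin 2 × Fin 2 => a p.1 * b p.2)

/-- Standard basis of `ℂ²`. -/
def e (i : Fin 2) : Qubit := EuclideanSpace.single i 1

/-- Reduced density matrix of `|Ψ⟩⟨Ψ|` on the first tensor factor. -/
def rho1 (Ψ : TwoQubit) : Matrix (Fin 2) (Fin 2) ℂ :=
  Matrix.of fun i j => ∑ k, Ψ (i, k) * (starRingEnd ℂ) (Ψ (j, k))

/-- Reduced density matrix of `|Ψ⟩⟨Ψ|` on the second tensor factor. -/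
def rho2 (Ψ : TwoQubit) : Matrix (Fin 2) (Fin 2) ℂ :=
  Matrix.of fun i j => ∑ k, Ψ (k, i) * (starRingEnd ℂ) (Ψ (k, j))

/-- A maximally entangled state of two qubits: a unit vector both of whose
reduced density operators equal `(1/2)·1` (equivalently, both Schmidt
coefficients equal `1/2`). -/
def MaxEnt (Ψ : TwoQubit) : Prop :=
  ‖Ψ‖ = 1 ∧ rho1 Ψ = (1 / 2 : ℂ) • 1 ∧ rho2 Ψ = (1 / 2 : ℂ) • 1

/-- A product state: an elementary tensor. -/
def IsProduct (Ψ : TwoQubit) : Prop := ∃ a b : Qubit, Ψ = tp a b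

/-- The rank-one operator `|a⟩⟨b| : x ↦ ⟨b, x⟩ a`, as a matrix. -/
def ketBra (a b : Qubit) : Matrix (Fin 2) (Fin 2) ℂ :=
  Matrix.vecMulVec a (star (b : Fin 2 → ℂ))

/-- Let `Ψ = (1/√2)(e₀⊗ψ₀ + e₁⊗ψ₁)` and `Φ = (1/√2)(e₀⊗φ₀ + e₁⊗φ₁)`
be orthogonal maximally entangled two-qubit states.  If the unitary
`U = |φ₀⟩⟨ψ₀| + |φ₁⟩⟨ψ₁|` is Hermitian, then `(1/√2)(Ψ + Φ)` is a product state. -/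
theorem stmt_6 (ψ0 ψ1 φ0 φ1 : Qubit)
    (hψ : Orthonormal ℂ ![ψ0, ψ1]) (hφ : Orthonormal ℂ ![φ0, φ1])
    (Ψ Φ : TwoQubit)
    (hΨ : Ψ = ((Real.sqrt 2 : ℂ))⁻¹ • (tp (e 0) ψ0 + tp (e 1) ψ1))
    (hΦ : Φ = ((Real.sqrt 2 : ℂ))⁻¹ • (tp (e 0) φ0 + tp (e 1) φ1))
    (horth : inner ℂ Ψ Φ = (0 : ℂ))
    (hHerm : (ketBra φ0 ψ0 + ketBra φ1 ψ1)ᴴ = ketBra φ0 ψ0 + ketBra φ1 ψ1) :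
    IsProduct (((Real.sqrt 2 : ℂ))⁻¹ • (Ψ + Φ)) := by
  -- scalar orthonormality facts
  have hψ' := orthonormal_iff_ite.mp hψ
  have hφ' := orthonormal_iff_ite.mp hφ
  have hp00 := hψ' 0 0; have hp01 := hψ' 0 1; have hp10 := hψ' 1 0; have hp11 := hψ' 1 1
  have hq00 := hφ' 0 0; have hq01 := hφ' 0 1; have hq10 := hφ' 1 0; have hq11 := hφ' 1 1
  simp only [PiLp.inner_apply, RCLike.inner_apply, Fin.sum_univ_two,
    Matrix.cons_val_zero, Matrix.cons_val_one, Matrix.head_cons, if_true, if_false,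
    Fin.zero_eq_one_iff, Fin.one_eq_zero_iff, ite_true, ite_false, reduceIte,
    Nat.succ_ne_self, Ne, not_false_iff] at hp00 hp01 hp10 hp11 hq00 hq01 hq10 hq11
  norm_num at hp00 hp01 hp10 hp11 hq00 hq01 hq10 hq11
  -- clean orthogonality
  have hx : (Real.sqrt 2 : ℂ) ≠ 0 := by
    simpa using Real.sqrt_ne_zero'.mpr (by norm_num : (0:ℝ) < 2)
  have hcl : (starRingEnd ℂ) (ψ0 0) * φ0 0 + (starRingEnd ℂ) (ψ0 1) * φ0 1 +
      (starRingEnd ℂ) (ψ1 0) * φ1 0 + (starRingEnd ℂ) (ψ1 1) * φ1 1 = 0 := by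
    rw [hΨ, hΦ] at horth
    simp only [PiLp.inner_apply, RCLike.inner_apply, Fintype.sum_prod_type,
      Fin.sum_univ_two, PiLp.smul_apply, PiLp.add_apply, smul_eq_mul, tp, e,
      EuclideanSpace.single_apply, map_mul, map_inv₀, Complex.conj_ofReal] at horth
    norm_num at horth
    field_simp at horth
    linear_combination horth
  -- matrices
  set A : Matrix (Fin 2) (Fin 2) ℂ := !![ψ0 0, ψ1 0; ψ0 1, ψ1 1] with hAdef
  set B : Matrix (Fin 2) (Fin 2) ℂ := !![φ0 0, φ1 0; φ0 1, φ1 1] with hBdef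
  have hA : Aᴴ * A = 1 := by
    ext i j
    fin_cases i <;> fin_cases j <;>
      simp [hAdef, Matrix.mul_apply, Fin.sum_univ_two, Matrix.conjTranspose_apply,
        Matrix.one_apply] <;>
      first
        | linear_combination hp00 | linear_combination hp01
        | linear_combination hp10 | linear_combination hp11
  have hB : Bᴴ * B = 1 := by
    ext i j
    fin_cases i <;> fin_cases j <;>
      simp [hBdef, Matrix.mul_apply, Fin.sum_univ_two, Matrix.conjTranspose_apply,
        Matrix.one_apply] <;>
      first
        | linear_combination hq00 | linear_combination hq01
        | linear_combination hq10 | linear_combination hq11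
  set U : Matrix (Fin 2) (Fin 2) ℂ := ketBra φ0 ψ0 + ketBra φ1 ψ1 with hUdef
  have hUeq : U = B * Aᴴ := by
    ext i j
    fin_cases i <;> fin_cases j <;>
      simp [hUdef, hAdef, hBdef, ketBra, Matrix.vecMulVec_apply, Matrix.add_apply,
        Matrix.mul_apply, Fin.sum_univ_two, Matrix.conjTranspose_apply, Pi.star_apply,
        Complex.star_def] <;> ring
  have hUU : U * U = 1 := by
    nth_rewrite 2 [← hHerm]
    rw [hUeq, Matrix.conjTranspose_mul, Matrix.conjTranspose_conjTranspose,
      Matrix.mul_assoc, ← Matrix.mul_assoc Aᴴ, hA, Matrix.one_mul]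
    exact mul_eq_one_comm.mp hB
  have h1 : U 0 0 * U 0 0 + U 0 1 * U 1 0 = 1 := by
    have h := congrArg (fun M => M 0 0) hUU
    simpa [Matrix.mul_apply, Fin.sum_univ_two, Matrix.one_apply] using h
  have ha : U 0 0 + U 1 1 = 0 := by
    simp only [hUdef, ketBra, Matrix.add_apply, Matrix.vecMulVec_apply, Pi.star_apply,
      Complex.star_def]
    linear_combination hcl
  have hdet1U : (1 + U).det = 0 := by
    rw [Matrix.det_fin_two]
    simp only [Matrix.add_apply, Matrix.one_apply, if_true, ite_true, reduceIte,
      Fin.zero_eq_one_iff, Fin.one_eq_zero_iff, ite_false, if_false]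
    norm_num
    linear_combination -h1 + (1 + U 0 0) * ha
  have hUA : U * A = B := by
    rw [hUeq, Matrix.mul_assoc, hA, Matrix.mul_one]
  have hdet : (A + B).det = 0 := by
    have hstep : A + B = (1 + U) * A := by
      rw [Matrix.add_mul, Matrix.one_mul, hUA]
    rw [hstep, Matrix.det_mul, hdet1U, zero_mul]
  have hkey : (ψ0 0 + φ0 0) * (ψ1 1 + φ1 1) - (ψ1 0 + φ1 0) * (ψ0 1 + φ0 1) = 0 := by
    rw [Matrix.det_fin_two] at hdet
    simp only [hAdef, hBdef, Matrix.add_apply] at hdet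
    simpa using hdet
  -- final construction
  clear hψ' hφ' hA hB hUeq hUU h1 ha hdet1U hUA hdet hHerm hUdef hAdef hBdef horth
  clear hp00 hp01 hp10 hp11 hq00 hq01 hq10 hq11 hcl hψ hφ
  clear U A B
  set c : ℂ := ((Real.sqrt 2 : ℂ))⁻¹ with hcdef
  set d : ℂ := c * c with hddef
  have hS : ∀ i k : Fin 2, (c • (Ψ + Φ)) (i, k) =
      d * ![![ψ0 0 + φ0 0, ψ0 1 + φ0 1], ![ψ1 0 + φ1 0, ψ1 1 + φ1 1]] i k := by
    intro i k
    rw [hΨ, hΦ]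
    fin_cases i <;> fin_cases k <;>
      simp [tp, e, EuclideanSpace.single_apply, PiLp.smul_apply, PiLp.add_apply,
        smul_eq_mul, hddef] <;> ring
  set x0 := ψ0 0 + φ0 0
  set x1 := ψ0 1 + φ0 1
  set y0 := ψ1 0 + φ1 0
  set y1 := ψ1 1 + φ1 1
  have key : x0 * y1 - y0 * x1 = 0 := hkey
  clear hkey hΨ hΦ
  by_cases h0 : x0 ≠ 0
  · refine ⟨!₂[1, y0 / x0], !₂[d * x0, d * x1], ?_⟩
    ext p
    obtain ⟨i, k⟩ := p
    rw [hS i k]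
    show _ = _ * _
    fin_cases i <;> fin_cases k <;> simp <;> field_simp <;>
      first
        | linear_combination d * key
        | linear_combination (-(c * c)) * key
        | linear_combination (c * c) * key
        | linear_combination (-2 : ℂ) * key
        | linear_combination (2 : ℂ) * key
        | ring
  · push_neg at h0
    by_cases h1 : x1 ≠ 0
    · have hy0z : y0 = 0 := by
        have : y0 * x1 = 0 := by linear_combination y1 * h0 - key
        exact (mul_eq_zero.mp this).resolve_right h1
      refine ⟨!₂[d * x1, d * y1], !₂[0, 1], ?_⟩
      ext p
      obtain ⟨i, k⟩ := p
      rw [hS i k]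
      show _ = _ * _
      have h0' : ψ0 0 + φ0 0 = 0 := h0
      have hy0z' : ψ1 0 + φ1 0 = 0 := hy0z
      fin_cases i <;> fin_cases k <;> simp [h0, hy0z] <;>
        first
          | linear_combination (2 * (ψ1 1 + φ1 1)) * h0'
          | linear_combination (2 * (ψ1 1 + φ1 1)) * h0' + (2 * (ψ0 1 + φ0 1)) * hy0z'
          | linear_combination (c * c) * h0'
          | ring
    · push_neg at h1
      have h0' : ψ0 0 + φ0 0 = 0 := h0
      have h1' : ψ0 1 + φ0 1 = 0 := h1
      refine ⟨!₂[0, 1], !₂[d * y0, d * y1], ?_⟩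
      ext p
      obtain ⟨i, k⟩ := p
      rw [hS i k]
      show _ = _ * _
      fin_cases i <;> fin_cases k <;> simp [h0, h1] <;>
        first
          | linear_combination (2 * (ψ1 1 + φ1 1)) * h0'
          | linear_combination (2 * (ψ1 1 + φ1 1)) * h1'
          | linear_combination (2 * (ψ1 0 + φ1 0)) * h0'
          | linear_combination (2 * (ψ1 0 + φ1 0)) * h1'
          | linear_combination (c * c) * h0'
          | linear_combination (c * c) * h1'
          | ring
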